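/- arXiv:1707.07463 — 5 statements merged into one kernel-verified Lean document; each statement's English description precedes it below -/
import Mathlib

section
/- Let q ∈ (1,2) and t₀ ∈ ℝ. The function u : ℝ → ℝ defined by u(t) = (2q/(2-q)²)^(1/(q-2)) · (t-t₀)^(2/(2-q)) for t > t₀ and u(t) = 0 for t ≤ t₀ is twice continuously differentiable and satisfies u''(t) = |u(t)|^(q-2) u(t) for all t ∈ ℝ, yet u vanishes on the open set (-∞, t₀) without being identically zero. -/
open Real

lemma maxpow_hasDerivAt {p : ℝ} (hp : 1 < p) (x : ℝ) :
    HasDerivAt (fun y : ℝ => max y 0 ^ p) (p * max x 0 ^ (p - 1)) x := by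
  have hp0 : p ≠ 0 := by positivity
  have hp1 : p - 1 ≠ 0 := by intro h; rw [sub_eq_zero] at h; linarith
  rcases lt_trichotomy x 0 with hx | hx | hx
  · have hev : (fun y : ℝ => max y 0 ^ p) =ᶠ[nhds x] fun _ => (0:ℝ) := by
      filter_upwards [Iio_mem_nhds hx] with y hy
      rw [max_eq_right (le_of_lt hy), Real.zero_rpow hp0]
    have h := (hasDerivAt_const x (0:ℝ)).congr_of_eventuallyEq hev
    rw [max_eq_right hx.le, Real.zero_rpow hp1, mul_zero]
    exact h
  · subst hx
    have hval : p * max (0:ℝ) 0 ^ (p - 1) = 0 := by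
      rw [max_self, Real.zero_rpow hp1, mul_zero]
    rw [hasDerivAt_iff_tendsto_slope, hval]
    apply squeeze_zero_norm' (a := fun y : ℝ => |y| ^ (p - 1))
    · filter_upwards [self_mem_nhdsWithin] with y (hy : y ≠ 0)
      have hy' : (0:ℝ) < |y| := abs_pos.mpr hy
      have hb : |max y 0 ^ p| ≤ |y| ^ p := by
        rcases le_or_gt y 0 with h | h
        · rw [max_eq_right h, Real.zero_rpow hp0, abs_zero]
          positivity
        · rw [max_eq_left h.le, abs_of_nonneg (Real.rpow_nonneg h.le p),
            abs_of_pos h]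
      have : ‖slope (fun y : ℝ => max y 0 ^ p) 0 y‖ = |max y 0 ^ p| / |y| := by
        simp [slope_def_field, max_self, Real.zero_rpow hp0, abs_div]
      rw [this]
      calc |max y 0 ^ p| / |y| ≤ |y| ^ p / |y| := by gcongr
        _ = |y| ^ (p - 1) := by
            rw [Real.rpow_sub hy', Real.rpow_one]
    · have hc : ContinuousAt (fun y : ℝ => |y| ^ (p - 1)) 0 := by
        apply ContinuousAt.rpow_const
        · exact continuous_abs.continuousAt
        · right; linarith
      have := hc.tendsto
      simp only [abs_zero, Real.zero_rpow hp1] at this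
      exact this.mono_left nhdsWithin_le_nhds
  · have hev : (fun y : ℝ => max y 0 ^ p) =ᶠ[nhds x] fun y => y ^ p := by
      filter_upwards [Ioi_mem_nhds hx] with y hy
      rw [max_eq_left (le_of_lt hy)]
    rw [max_eq_left hx.le]
    exact (Real.hasDerivAt_rpow_const (Or.inl (ne_of_gt hx))).congr_of_eventuallyEq hev

theorem stmt0 (q t₀ : ℝ) (hq1 : 1 < q) (hq2 : q < 2)
    (u : ℝ → ℝ)
    (hu : ∀ t : ℝ, u t = if t ≤ t₀ then 0
      else (2 * q / (2 - q) ^ 2) ^ (1 / (q - 2)) * (t - t₀) ^ (2 / (2 - q))) :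
    ContDiff ℝ 2 u ∧
    (∀ t : ℝ, deriv (deriv u) t = if u t = 0 then 0 else |u t| ^ (q - 2) * u t) ∧
    (∀ t < t₀, u t = 0) ∧ ¬ (∀ t : ℝ, u t = 0) := by
  have h2q : (0:ℝ) < 2 - q := by linarith
  have hq2' : q - 2 ≠ 0 := by intro h; linarith
  set K : ℝ := 2 * q / (2 - q) ^ 2 with hK_def
  set c : ℝ := K ^ (1 / (q - 2)) with hc_def
  set p : ℝ := 2 / (2 - q) with hp_def
  have hK : 0 < K := by rw [hK_def]; positivity
  have hc : 0 < c := Real.rpow_pos_of_pos hK _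
  have hp2 : 2 < p := by
    rw [hp_def, lt_div_iff₀ h2q]; nlinarith
  have hp1 : 1 < p := by linarith
  have hp21 : 1 < p - 1 := by linarith
  have hpne : p ≠ 0 := by positivity
  have hp2ne : p - 2 ≠ 0 := by intro h; rw [sub_eq_zero] at h; linarith
  -- closed form
  have hueq : u = fun t => c * max (t - t₀) 0 ^ p := by
    funext t
    rw [hu t]
    split_ifs with h
    · rw [max_eq_right (by linarith), Real.zero_rpow hpne, mul_zero]
    · rw [max_eq_left (by push_neg at h; linarith)]
  -- first derivative
  have hd1 : ∀ t, HasDerivAt u (c * (p * max (t - t₀) 0 ^ (p - 1))) t := by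
    intro t
    rw [hueq]
    have h := (maxpow_hasDerivAt hp1 (t - t₀)).comp t ((hasDerivAt_id t).sub_const t₀)
    simpa using h.const_mul c
  have hderiv1 : deriv u = fun t => c * (p * max (t - t₀) 0 ^ (p - 1)) :=
    funext fun t => (hd1 t).deriv
  -- second derivative
  have hd2 : ∀ t, HasDerivAt (deriv u)
      (c * (p * ((p - 1) * max (t - t₀) 0 ^ (p - 2)))) t := by
    intro t
    rw [hderiv1]
    have h := (maxpow_hasDerivAt hp21 (t - t₀)).comp t ((hasDerivAt_id t).sub_const t₀)
    have he : p - 1 - 1 = p - 2 := by ring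
    simpa [Function.comp, mul_assoc, he] using h.const_mul (c * p)
  have hderiv2 : deriv (deriv u) = fun t => c * (p * ((p - 1) * max (t - t₀) 0 ^ (p - 2))) :=
    funext fun t => (hd2 t).deriv
  have hcontmax : Continuous fun t : ℝ => max (t - t₀) 0 :=
    (continuous_id.sub continuous_const).max continuous_const
  refine ⟨?_, ?_, ?_, ?_⟩
  · -- ContDiff
    have h2 : (2 : WithTop ℕ∞) = 1 + 1 := by norm_num
    rw [h2, contDiff_succ_iff_deriv]
    refine ⟨fun t => (hd1 t).differentiableAt, by simp, ?_⟩
    rw [contDiff_one_iff_deriv]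
    refine ⟨fun t => (hd2 t).differentiableAt, ?_⟩
    rw [hderiv2]
    exact continuous_const.mul (continuous_const.mul (continuous_const.mul
      (hcontmax.rpow_const fun x => Or.inr (by linarith))))
  · -- ODE
    intro t
    rw [hderiv2, hueq]
    simp only
    set x : ℝ := max (t - t₀) 0 with hx_def
    have hx0 : 0 ≤ x := le_max_right _ _
    rcases eq_or_lt_of_le hx0 with hx | hx
    · rw [← hx, Real.zero_rpow hpne, Real.zero_rpow hp2ne, mul_zero, mul_zero, mul_zero,
        mul_zero, if_pos rfl]
    · have hxp : 0 < x ^ p := Real.rpow_pos_of_pos hx _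
      have hcxp : 0 < c * x ^ p := by positivity
      rw [if_neg (ne_of_gt hcxp)]
      have hcK : c ^ (q - 2) = K := by
        rw [hc_def, ← Real.rpow_mul hK.le, one_div, inv_mul_cancel₀ hq2', Real.rpow_one]
      have hKpp : K = p * (p - 1) := by
        rw [hK_def, hp_def]; field_simp; ring
      have hexp : p * (q - 2) + p = p - 2 := by
        rw [hp_def]; field_simp; ring
      rw [abs_of_pos hcxp, Real.mul_rpow hc.le hxp.le, ← Real.rpow_mul hx0,
        hcK, hKpp, show p - 2 = p * (q - 2) + p from hexp.symm, Real.rpow_add hx]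
      ring
  · intro t ht
    rw [hu t, if_pos ht.le]
  · intro h
    have h1 := h (t₀ + 1)
    rw [hu (t₀ + 1), if_neg (by linarith)] at h1
    have : t₀ + 1 - t₀ = 1 := by ring
    rw [this, Real.one_rpow, mul_one] at h1
    exact (ne_of_gt hc) h1
end

section
/- Let q ∈ (1,2) and let u : ℝ → ℝ be a C² solution of -u'' = |u|^(q-2)u on ℝ which is not identically zero. If u(t₀) = 0 at some point t₀, then u'(t₀) ≠ 0; consequently all zeros of u are isolated and u cannot vanish on any open interval. -/
open Real

private lemma rpow_split {x a : ℝ} (hx : 0 < x) : x ^ (a + 1) = x ^ a * x := by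
  rw [Real.rpow_add hx, Real.rpow_one]

private lemma abs_rpow_littleO {q : ℝ} (hq1 : 1 < q) {u : ℝ → ℝ}
    (hud : Differentiable ℝ u) {t : ℝ} (ht : u t = 0) :
    (fun s => |u s| ^ q) =o[nhds t] fun s => s - t := by
  obtain ⟨C, hC, hbig⟩ := ((hud t).isBigO_sub).exists_pos
  rw [Asymptotics.isBigOWith_iff] at hbig
  rw [Asymptotics.isLittleO_iff]
  intro c hc
  -- choose δ such that C^q * δ^(q-1) ≤ c
  have hq0 : (0:ℝ) < q - 1 := by linarith
  have hcont : ContinuousAt (fun x : ℝ => C ^ q * |x| ^ (q - 1)) 0 := by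
    apply ContinuousAt.mul continuousAt_const
    exact (Real.continuousAt_rpow_const _ _ (Or.inr hq0.le)).comp continuous_abs.continuousAt
  have h0 : C ^ q * |(0:ℝ)| ^ (q - 1) = 0 := by
    rw [abs_zero, Real.zero_rpow (by linarith), mul_zero]
  have hev : ∀ᶠ x in nhds (0:ℝ), C ^ q * |x| ^ (q - 1) < c := by
    have := hcont.eventually_lt continuousAt_const (by rw [h0]; exact hc)
    exact this
  have hev2 : ∀ᶠ s in nhds t, C ^ q * |s - t| ^ (q - 1) < c := by
    have htend : Filter.Tendsto (fun s : ℝ => s - t) (nhds t) (nhds 0) := by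
      have h := ((continuous_id (X := ℝ)).sub (continuous_const (y := t))).tendsto t
      simpa using ((continuous_id (X := ℝ)).tendsto t).sub_const t
    exact htend.eventually hev
  filter_upwards [hbig, hev2] with s hs hsc
  have habs : |u s| ≤ C * |s - t| := by
    simpa [ht, Real.norm_eq_abs] using hs
  have h1 : |u s| ^ q ≤ (C * |s - t|) ^ q :=
    Real.rpow_le_rpow (abs_nonneg _) habs (by linarith)
  have h2 : (C * |s - t|) ^ q = C ^ q * |s - t| ^ q :=
    Real.mul_rpow hC.le (abs_nonneg _)
  have h3 : |s - t| ^ q = |s - t| ^ (q - 1) * |s - t| := by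
    rcases eq_or_ne (s - t) 0 with h | h
    · simp [h, Real.zero_rpow (by linarith : q ≠ 0)]
    · have h' := rpow_split (a := q - 1) (abs_pos.mpr h)
      rw [show q - 1 + 1 = q by ring] at h'
      exact h'
  have h4 : |u s| ^ q ≤ C ^ q * |s - t| ^ (q - 1) * |s - t| := by
    calc |u s| ^ q ≤ C ^ q * |s - t| ^ q := by rw [← h2]; exact h1
    _ = C ^ q * |s - t| ^ (q - 1) * |s - t| := by rw [h3]; ring
  have h5 : C ^ q * |s - t| ^ (q - 1) * |s - t| ≤ c * |s - t| := by
    apply mul_le_mul_of_nonneg_right hsc.le (abs_nonneg _)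
  rw [Real.norm_eq_abs, Real.norm_eq_abs, abs_of_nonneg (Real.rpow_nonneg (abs_nonneg _) _)]
  linarith

private lemma abs_rpow_hasDeriv {q : ℝ} (hq1 : 1 < q) (hq2 : q < 2) {u : ℝ → ℝ}
    (hud : Differentiable ℝ u) (t : ℝ) :
    HasDerivAt (fun s => |u s| ^ q)
      (q * ((if u t = 0 then 0 else |u t| ^ (q - 2) * u t) * deriv u t)) t := by
  rcases eq_or_ne (u t) 0 with ht | ht
  · have h0 : HasDerivAt (fun s => |u s| ^ q) 0 t := by
      rw [hasDerivAt_iff_isLittleO]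
      simpa [ht, abs_zero, Real.zero_rpow (show q ≠ 0 by linarith)] using
        abs_rpow_littleO hq1 hud ht
    rw [if_pos ht]
    convert h0 using 1
    ring
  · rw [if_neg ht]
    rcases lt_or_gt_of_ne ht with hneg | hpos
    · -- u t < 0 : |u s| = -u s near t
      have hev : ∀ᶠ s in nhds t, u s < 0 :=
        (hud.continuous.continuousAt).eventually_lt continuousAt_const hneg
      have hder : HasDerivAt (fun s => (-u s) ^ q)
          ((-deriv u t) * q * (-u t) ^ (q - 1)) t :=
        ((hud t).hasDerivAt.neg).rpow_const (Or.inl (by simpa using fun h => ht (by linarith)))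
      have heq' : (fun s => |u s| ^ q) =ᶠ[nhds t] fun s => (-u s) ^ q := by
        filter_upwards [hev] with s hs
        rw [abs_of_neg hs]
      have := hder.congr_of_eventuallyEq heq'
      refine this.congr_deriv ?_
      rw [abs_of_neg hneg]
      have hsp : (-u t) ^ (q - 1) = (-u t) ^ (q - 2) * (-u t) := by
        have h' := rpow_split (a := q - 2) (show (0:ℝ) < -u t by linarith)
        rw [show q - 2 + 1 = q - 1 by ring] at h'
        exact h'
      rw [hsp]; ring
    · have hev : ∀ᶠ s in nhds t, 0 < u s :=
        continuousAt_const.eventually_lt (hud.continuous.continuousAt) hpos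
      have hder : HasDerivAt (fun s => (u s) ^ q)
          ((deriv u t) * q * (u t) ^ (q - 1)) t :=
        (hud t).hasDerivAt.rpow_const (Or.inl ht)
      have heq' : (fun s => |u s| ^ q) =ᶠ[nhds t] fun s => (u s) ^ q := by
        filter_upwards [hev] with s hs
        rw [abs_of_pos hs]
      have := hder.congr_of_eventuallyEq heq'
      refine this.congr_deriv ?_
      rw [abs_of_pos hpos]
      have hsp : (u t) ^ (q - 1) = (u t) ^ (q - 2) * (u t) := by
        have h' := rpow_split (a := q - 2) hpos
        rw [show q - 2 + 1 = q - 1 by ring] at h'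
        exact h'
      rw [hsp]; ring

theorem stmt2 (q : ℝ) (hq1 : 1 < q) (hq2 : q < 2) (u : ℝ → ℝ)
    (hu : ContDiff ℝ 2 u)
    (heq : ∀ t : ℝ, -(deriv (deriv u) t) = if u t = 0 then 0 else |u t| ^ (q - 2) * u t)
    (hnontriv : ¬ (∀ t : ℝ, u t = 0))
    (t₀ : ℝ) (ht₀ : u t₀ = 0) :
    deriv u t₀ ≠ 0 ∧
    (∃ ε > 0, ∀ t ∈ Set.Ioo (t₀ - ε) (t₀ + ε), t ≠ t₀ → u t ≠ 0) ∧
    (∀ a b : ℝ, a < b → ¬ (∀ t ∈ Set.Ioo a b, u t = 0)) := by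
  have hq0 : (0:ℝ) < q := by linarith
  have hud : Differentiable ℝ u := hu.differentiable (by norm_num)
  have hu'd : Differentiable ℝ (deriv u) := by
    have h2 : ContDiff ℝ ((1:ℕ∞) + 1) u := by exact_mod_cast hu
    have := (contDiff_succ_iff_deriv.mp h2).2.2
    exact this.differentiable (by norm_num)
  -- energy
  set E : ℝ → ℝ := fun t => (deriv u t) ^ 2 / 2 + |u t| ^ q / q with hE
  have hEderiv : ∀ t, HasDerivAt E 0 t := by
    intro t
    have h1 : HasDerivAt (fun s => (deriv u s) ^ 2 / 2)
        ((2 : ℕ) * (deriv u t) ^ 1 * deriv (deriv u) t / 2) t :=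
      (((hu'd t).hasDerivAt).pow 2).div_const 2
    have h2 := abs_rpow_hasDeriv hq1 hq2 hud t
    have h3 := (h1.add (h2.div_const q))
    refine h3.congr_deriv ?_
    have h4 := heq t
    have hqne : q ≠ 0 := by linarith
    set w := if u t = 0 then 0 else |u t| ^ (q - 2) * u t with hw
    have h5 : deriv (deriv u) t = -w := by linarith
    rw [h5]
    field_simp
    ring
  have hEconst : ∀ x y, E x = E y :=
    is_const_of_deriv_eq_zero (fun x => (hEderiv x).differentiableAt)
      (fun x => (hEderiv x).deriv)
  -- key: at any zero, derivative nonzero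
  have key : ∀ s : ℝ, u s = 0 → deriv u s ≠ 0 := by
    intro s hs hds
    apply hnontriv
    intro t
    have hEs : E s = 0 := by simp [hE, hs, hds, Real.zero_rpow (by linarith : q ≠ 0)]
    have hEt : E t = 0 := (hEconst t s).trans hEs
    have h1 : 0 ≤ (deriv u t) ^ 2 / 2 := by positivity
    have h2 : 0 ≤ |u t| ^ q / q := div_nonneg (Real.rpow_nonneg (abs_nonneg _) q) hq0.le
    have h3 : |u t| ^ q / q = 0 := by
      simp only [hE] at hEt; linarith
    have h4 : |u t| ^ q = 0 := by
      rcases div_eq_zero_iff.mp h3 with h | h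
      · exact h
      · exact absurd h (by linarith)
    have h5 : |u t| = 0 := by
      by_contra h
      exact (Real.rpow_ne_zero (abs_nonneg _) (by linarith : q ≠ 0)).mpr h h4
    exact abs_eq_zero.mp h5
  have hd0 : deriv u t₀ ≠ 0 := key t₀ ht₀
  refine ⟨hd0, ?_, ?_⟩
  · -- isolated zero
    have hslope : Filter.Tendsto (slope u t₀) (nhdsWithin t₀ {t₀}ᶜ) (nhds (deriv u t₀)) :=
      hasDerivAt_iff_tendsto_slope.mp (hud t₀).hasDerivAt
    have hev : ∀ᶠ s in nhdsWithin t₀ {t₀}ᶜ, slope u t₀ s ≠ 0 := by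
      have : {x : ℝ | x ≠ 0} ∈ nhds (deriv u t₀) :=
        isOpen_ne.mem_nhds hd0
      exact hslope.eventually this
    rw [Filter.eventually_iff, mem_nhdsWithin_iff_exists_mem_nhds_inter] at hev
    obtain ⟨U, hU, hUs⟩ := hev
    obtain ⟨ε, hε, hball⟩ := Metric.mem_nhds_iff.mp hU
    refine ⟨ε, hε, fun t ht htne => ?_⟩
    have htU : t ∈ U := by
      apply hball
      rw [Metric.mem_ball, Real.dist_eq]
      rcases ht with ⟨h1, h2⟩
      rw [abs_lt]; constructor <;> linarith
    have : slope u t₀ t ≠ 0 := hUs ⟨htU, htne⟩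
    intro hut
    apply this
    rw [slope_def_field, hut, ht₀]
    simp
  · intro a b hab hall
    set m := (a + b) / 2 with hm
    have hmem : m ∈ Set.Ioo a b := ⟨by linarith, by linarith⟩
    have hzero : u m = 0 := hall m hmem
    have hdm : deriv u m = 0 := by
      have hev : u =ᶠ[nhds m] fun _ => 0 := by
        filter_upwards [isOpen_Ioo.mem_nhds hmem] with s hs
        exact hall s hs
      rw [Filter.EventuallyEq.deriv_eq hev]
      simp
    exact key m hzero hdm
end

section
/- Let F : Ω × ℝ → ℝ with F(x,s) = ∫₀^s f(x,t) dt, and suppose there exist ε₀ > 0 and q < 2 such that 0 < f(x,s)s ≤ q F(x,s) for a.e. s ∈ (-ε₀,ε₀)\{0} and all x ∈ Ω. Then for each fixed x ∈ Ω, the function s ↦ F(x,s)/|s|^q is nonincreasing on (0, ε₀) and nondecreasing on (-ε₀, 0). -/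
open Real MeasureTheory

private lemma aux_rpow_integral (q : ℝ) {c d : ℝ} (hc : 0 < c) (hcd : c ≤ d) :
    ∫ t in c..d, q * t ^ (-q - 1) = c ^ (-q) - d ^ (-q) := by
  have hcont : ContinuousOn (fun t : ℝ => q * t ^ (-q - 1)) (Set.uIcc c d) := by
    refine continuousOn_const.mul fun t ht => ?_
    have ht0 : t ≠ 0 := by
      rw [Set.uIcc_of_le hcd] at ht
      exact (lt_of_lt_of_le hc ht.1).ne'
    exact (Real.continuousAt_rpow_const t _ (Or.inl ht0)).continuousWithinAt
  have hderiv : ∀ t ∈ Set.uIcc c d,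
      HasDerivAt (fun t : ℝ => -(t ^ (-q))) (q * t ^ (-q - 1)) t := by
    intro t ht
    have ht0 : t ≠ 0 := by
      rw [Set.uIcc_of_le hcd] at ht
      exact (lt_of_lt_of_le hc ht.1).ne'
    have h := (Real.hasDerivAt_rpow_const (p := -q) (Or.inl ht0)).neg
    have he : -(-q * t ^ (-q - 1)) = q * t ^ (-q - 1) := by ring
    rw [he] at h
    exact h
  rw [intervalIntegral.integral_eq_sub_of_hasDerivAt hderiv hcont.intervalIntegrable]
  ring

private lemma key_antitone (f : ℝ → ℝ)
    (hfi : ∀ a b : ℝ, IntervalIntegrable f volume a b)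
    {ε₀ q : ℝ} (hε₀ : 0 < ε₀)
    (hsub : ∀ᵐ s ∂(volume.restrict (Set.Ioo 0 ε₀)),
      f s * s ≤ q * ∫ t in (0:ℝ)..s, f t) :
    ∀ a ∈ Set.Ioo (0:ℝ) ε₀, ∀ b ∈ Set.Ioo (0:ℝ) ε₀, a ≤ b →
      (∫ t in (0:ℝ)..b, f t) / b ^ q ≤ (∫ t in (0:ℝ)..a, f t) / a ^ q := by
  intro a ha b hb hab
  rcases eq_or_lt_of_le hab with rfl | hab
  · exact le_refl _
  set F : ℝ → ℝ := fun s => ∫ t in (0:ℝ)..s, f t with hFdef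
  set g : ℝ → ℝ := fun t => q * t ^ (-q - 1) with hgdef
  have ha0 : 0 < a := ha.1
  have hb0 : 0 < b := hb.1
  have hbε : b < ε₀ := hb.2
  -- continuity facts
  have hFc : Continuous F := intervalIntegral.continuous_primitive hfi 0
  have hrp : ∀ r : ℝ, ContinuousOn (fun t : ℝ => t ^ r) (Set.Icc a b) := by
    intro r t ht
    exact (Real.continuousAt_rpow_const t r
      (Or.inl (lt_of_lt_of_le ha0 ht.1).ne')).continuousWithinAt
  have hgc : ContinuousOn g (Set.Icc a b) := continuousOn_const.mul (hrp _)
  -- integrability facts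
  have hfint : IntegrableOn f (Set.Icc a b) := by
    rw [integrableOn_Icc_iff_integrableOn_Ioc]
    exact (intervalIntegrable_iff_integrableOn_Ioc_of_le hab.le).mp (hfi a b)
  have h1 : IntegrableOn (fun t => f t * t ^ (-q)) (Set.Icc a b) :=
    hfint.mul_continuousOn (hrp _) isCompact_Icc
  have h1' : IntervalIntegrable (fun t => f t * t ^ (-q)) volume a b := by
    rw [intervalIntegrable_iff_integrableOn_Ioc_of_le hab.le]
    exact h1.mono_set Set.Ioc_subset_Icc_self
  have h2 : IntegrableOn (fun t => g t * F t) (Set.Icc a b) :=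
    (hgc.mul hFc.continuousOn).integrableOn_Icc
  have h2' : IntervalIntegrable (fun t => g t * F t) volume a b := by
    rw [intervalIntegrable_iff_integrableOn_Ioc_of_le hab.le]
    exact h2.mono_set Set.Ioc_subset_Icc_self
  have hgint : IntegrableOn g (Set.Ioc a b) :=
    hgc.integrableOn_Icc.mono_set Set.Ioc_subset_Icc_self
  have hfIoc : IntegrableOn f (Set.Ioc a b) := hfint.mono_set Set.Ioc_subset_Icc_self
  -- split of the primitive
  have hFsplit : ∀ t : ℝ, F t = F a + ∫ u in a..t, f u := by
    intro t
    rw [hFdef]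
    exact (intervalIntegral.integral_add_adjacent_intervals (hfi 0 a) (hfi a t)).symm
  -- the Fubini step
  set Φ : ℝ → ℝ → ℝ := fun t u => if u ≤ t then g t * f u else 0 with hΦdef
  have hΦint : Integrable (Function.uncurry Φ)
      ((volume.restrict (Set.Ioc a b)).prod (volume.restrict (Set.Ioc a b))) := by
    have he : Function.uncurry Φ =
        Set.indicator {p : ℝ × ℝ | p.2 ≤ p.1} (fun p => g p.1 * f p.2) := by
      funext p
      simp only [Function.uncurry, hΦdef, Set.indicator_apply, Set.mem_setOf_eq]
    rw [he]
    exact (hgint.mul_prod hfIoc).indicator (measurableSet_le measurable_snd measurable_fst)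
  have inner1 : ∀ t ∈ Set.Ioc a b,
      ∫ u in Set.Ioc a b, Φ t u = g t * ∫ u in a..t, f u := by
    intro t ht
    have he : (fun u => Φ t u) = Set.indicator (Set.Iic t) (fun u => g t * f u) := by
      funext u
      simp only [hΦdef, Set.indicator_apply, Set.mem_Iic]
    rw [he, setIntegral_indicator measurableSet_Iic]
    have hset : Set.Ioc a b ∩ Set.Iic t = Set.Ioc a t := by
      ext u
      simp only [Set.mem_inter_iff, Set.mem_Ioc, Set.mem_Iic]
      constructor
      · rintro ⟨⟨h1, _⟩, h3⟩; exact ⟨h1, h3⟩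
      · rintro ⟨h1, h3⟩; exact ⟨⟨h1, h3.trans ht.2⟩, h3⟩
    rw [hset, ← intervalIntegral.integral_of_le ht.1.le, intervalIntegral.integral_const_mul]
  have inner2 : ∀ u ∈ Set.Ioc a b,
      ∫ t in Set.Ioc a b, Φ t u = f u * (u ^ (-q) - b ^ (-q)) := by
    intro u hu
    have he : (fun t => Φ t u) = Set.indicator (Set.Ici u) (fun t => g t * f u) := by
      funext t
      simp only [hΦdef, Set.indicator_apply, Set.mem_Ici]
    rw [he, setIntegral_indicator measurableSet_Ici]
    have hset : Set.Ioc a b ∩ Set.Ici u = Set.Icc u b := by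
      ext t
      simp only [Set.mem_inter_iff, Set.mem_Ioc, Set.mem_Ici, Set.mem_Icc]
      constructor
      · rintro ⟨⟨_, h2⟩, h3⟩; exact ⟨h3, h2⟩
      · rintro ⟨h1, h2⟩; exact ⟨⟨lt_of_lt_of_le hu.1 h1, h2⟩, h1⟩
    rw [hset, integral_Icc_eq_integral_Ioc, ← intervalIntegral.integral_of_le hu.2,
      intervalIntegral.integral_mul_const,
      aux_rpow_integral q (lt_of_lt_of_le ha0 hu.1.le) hu.2]
    ring
  have claimJ : (∫ t in a..b, g t * ∫ u in a..t, f u)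
      = ∫ u in a..b, f u * (u ^ (-q) - b ^ (-q)) := by
    rw [intervalIntegral.integral_of_le hab.le, intervalIntegral.integral_of_le hab.le]
    calc ∫ t in Set.Ioc a b, g t * ∫ u in a..t, f u
        = ∫ t in Set.Ioc a b, ∫ u in Set.Ioc a b, Φ t u := by
          refine setIntegral_congr_fun measurableSet_Ioc fun t ht => ?_
          exact (inner1 t ht).symm
      _ = ∫ u in Set.Ioc a b, ∫ t in Set.Ioc a b, Φ t u :=
          MeasureTheory.integral_integral_swap hΦint
      _ = ∫ u in Set.Ioc a b, f u * (u ^ (-q) - b ^ (-q)) :=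
          setIntegral_congr_fun measurableSet_Ioc fun u hu => inner2 u hu
  -- Claim A : the integration-by-parts identity
  have hgi : ∫ t in a..b, g t = a ^ (-q) - b ^ (-q) := aux_rpow_integral q ha0 hab.le
  have hfab : ∫ t in a..b, f t = F b - F a := by
    have := intervalIntegral.integral_add_adjacent_intervals (hfi 0 a) (hfi a b)
    rw [hFdef]
    simp only at this ⊢
    linarith
  have hIg1 : IntervalIntegrable (fun t => g t * F a) volume a b := by
    rw [intervalIntegrable_iff_integrableOn_Ioc_of_le hab.le]
    exact (hgc.mul continuousOn_const).integrableOn_Icc.mono_set Set.Ioc_subset_Icc_self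
  have hIg2 : IntervalIntegrable (fun t => g t * ∫ u in a..t, f u) volume a b := by
    rw [intervalIntegrable_iff_integrableOn_Ioc_of_le hab.le]
    exact (hgc.mul (intervalIntegral.continuous_primitive hfi a).continuousOn).integrableOn_Icc.mono_set
      Set.Ioc_subset_Icc_self
  have hsplit2 : IntervalIntegrable (fun t => f t * b ^ (-q)) volume a b := by
    rw [intervalIntegrable_iff_integrableOn_Ioc_of_le hab.le]
    exact hfIoc.mul_const _
  have claimA : (∫ t in a..b, g t * F t)
      = F a * a ^ (-q) - F b * b ^ (-q) + ∫ t in a..b, f t * t ^ (-q) := by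
    have e1 : (∫ t in a..b, g t * F t)
        = (∫ t in a..b, g t * F a) + ∫ t in a..b, g t * ∫ u in a..t, f u := by
      rw [← intervalIntegral.integral_add hIg1 hIg2]
      refine intervalIntegral.integral_congr fun t _ => ?_
      rw [hFsplit t]; ring
    have e2 : (∫ t in a..b, g t * F a) = (a ^ (-q) - b ^ (-q)) * F a := by
      rw [intervalIntegral.integral_mul_const, hgi]
    have e3 : (∫ u in a..b, f u * (u ^ (-q) - b ^ (-q)))
        = (∫ t in a..b, f t * t ^ (-q)) - (F b - F a) * b ^ (-q) := by
      have : (∫ u in a..b, f u * (u ^ (-q) - b ^ (-q)))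
          = (∫ t in a..b, f t * t ^ (-q)) - ∫ t in a..b, f t * b ^ (-q) := by
        rw [← intervalIntegral.integral_sub h1' hsplit2]
        refine intervalIntegral.integral_congr fun t _ => ?_
        ring
      rw [this, intervalIntegral.integral_mul_const, hfab]
    rw [e1, e2, claimJ, e3]
    ring
  -- Claim B : comparison of integrands
  have hsubset : Set.Icc a b ⊆ Set.Ioo 0 ε₀ := fun t ht =>
    ⟨lt_of_lt_of_le ha0 ht.1, lt_of_le_of_lt ht.2 hbε⟩
  have hae : (fun t => f t * t ^ (-q)) ≤ᵐ[volume.restrict (Set.Icc a b)]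
      fun t => g t * F t := by
    filter_upwards [ae_restrict_of_ae_restrict_of_subset hsubset hsub,
      ae_restrict_mem measurableSet_Icc] with t hle hmem
    have ht0 : 0 < t := lt_of_lt_of_le ha0 hmem.1
    have hrw : t ^ (-q) = t ^ (-q - 1) * t := by
      rw [← Real.rpow_add_one ht0.ne' (-q - 1)]
      norm_num
    have hpos : (0:ℝ) ≤ t ^ (-q - 1) := (Real.rpow_pos_of_pos ht0 _).le
    have := mul_le_mul_of_nonneg_right hle hpos
    simp only [hgdef, hrw]
    nlinarith [this]
  have claimB : (∫ t in a..b, f t * t ^ (-q)) ≤ ∫ t in a..b, g t * F t :=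
    intervalIntegral.integral_mono_ae_restrict hab.le h1' h2' hae
  -- conclude
  have hmain : F b * b ^ (-q) ≤ F a * a ^ (-q) := by
    rw [claimA] at claimB
    linarith
  have hda : F a / a ^ q = F a * a ^ (-q) := by
    rw [Real.rpow_neg ha0.le, div_eq_mul_inv]
  have hdb : F b / b ^ q = F b * b ^ (-q) := by
    rw [Real.rpow_neg hb0.le, div_eq_mul_inv]
  rw [hFdef] at hda hdb
  simp only at hda hdb ⊢
  rw [hda, hdb]
  exact hmain

theorem stmt11 {X : Type*} (f F : X → ℝ → ℝ)
    (hfi : ∀ x : X, ∀ a b : ℝ, IntervalIntegrable (f x) volume a b)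
    (hF : ∀ (x : X) (s : ℝ), F x s = ∫ t in (0 : ℝ)..s, f x t)
    (ε₀ q : ℝ) (hε₀ : 0 < ε₀) (hq : q < 2)
    (hsub : ∀ x : X, ∀ᵐ s ∂(volume.restrict (Set.Ioo (-ε₀) ε₀)),
      s ≠ 0 → 0 < f x s * s ∧ f x s * s ≤ q * F x s) :
    ∀ x : X,
      AntitoneOn (fun s => F x s / |s| ^ q) (Set.Ioo 0 ε₀) ∧
      MonotoneOn (fun s => F x s / |s| ^ q) (Set.Ioo (-ε₀) 0) := by
  intro x
  constructor
  · -- positive side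
    have hpos_ae : ∀ᵐ s ∂(volume.restrict (Set.Ioo 0 ε₀)),
        f x s * s ≤ q * ∫ t in (0:ℝ)..s, f x t := by
      have hss : Set.Ioo (0:ℝ) ε₀ ⊆ Set.Ioo (-ε₀) ε₀ := fun s hs =>
        ⟨by linarith [hs.1], hs.2⟩
      filter_upwards [ae_restrict_of_ae_restrict_of_subset hss (hsub x),
        ae_restrict_mem measurableSet_Ioo] with s hs hmem
      rw [← hF x s]
      exact (hs hmem.1.ne').2
    intro a ha b hb hab
    have key := key_antitone (f x) (hfi x) hε₀ hpos_ae a ha b hb hab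
    simp only [hF x a, hF x b, abs_of_pos ha.1, abs_of_pos hb.1]
    exact key
  · -- negative side, via reflection
    set g : ℝ → ℝ := fun t => -f x (-t) with hgdef
    have hgi : ∀ a b : ℝ, IntervalIntegrable g volume a b := by
      intro a b
      have := ((IntervalIntegrable.iff_comp_neg (by simp)).mp (hfi x (-a) (-b))).neg
      simpa [hgdef, Pi.neg_def] using this
    have hGt : ∀ s : ℝ, (∫ t in (0:ℝ)..s, g t) = F x (-s) := by
      intro s
      rw [hF]
      calc (∫ t in (0:ℝ)..s, -f x (-t))
          = -∫ t in (0:ℝ)..s, f x (-t) := intervalIntegral.integral_neg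
        _ = -∫ t in (-s)..(0:ℝ), f x t := by
            rw [intervalIntegral.integral_comp_neg (f x), neg_zero]
        _ = ∫ t in (0:ℝ)..(-s), f x t := (intervalIntegral.integral_symm _ _).symm
    have hneg_ae : ∀ᵐ s ∂(volume.restrict (Set.Ioo 0 ε₀)),
        g s * s ≤ q * ∫ t in (0:ℝ)..s, g t := by
      have h1 : ∀ᵐ s ∂(volume.restrict (Set.Ioo (-ε₀) 0)),
          f x s * s ≤ q * F x s := by
        have hss : Set.Ioo (-ε₀) (0:ℝ) ⊆ Set.Ioo (-ε₀) ε₀ := fun s hs =>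
          ⟨hs.1, by linarith [hs.2]⟩
        filter_upwards [ae_restrict_of_ae_restrict_of_subset hss (hsub x),
          ae_restrict_mem measurableSet_Ioo] with s hs hmem
        exact (hs hmem.2.ne).2
      have hpre : (Neg.neg : ℝ → ℝ) ⁻¹' Set.Ioo (0:ℝ) ε₀ = Set.Ioo (-ε₀) 0 := by
        ext s
        simp only [Set.mem_preimage, Set.mem_Ioo]
        constructor
        · rintro ⟨h1, h2⟩; constructor <;> linarith
        · rintro ⟨h1, h2⟩; constructor <;> linarith
      have hmap : volume.restrict (Set.Ioo (0:ℝ) ε₀)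
          = Measure.map Neg.neg (volume.restrict (Set.Ioo (-ε₀) 0)) := by
        conv_lhs => rw [← Measure.map_neg_eq_self (volume : Measure ℝ),
          measurableEmbedding_neg.restrict_map, hpre]
      rw [hmap, measurableEmbedding_neg.ae_map_iff]
      filter_upwards [h1] with s hs
      have e1 : g (-s) * (-s) = f x s * s := by simp [hgdef]
      have e2 : (∫ t in (0:ℝ)..(-s), g t) = F x s := by rw [hGt]; norm_num
      rw [e1, e2]
      exact hs
    intro a ha b hb hab
    have hb' : -b ∈ Set.Ioo (0:ℝ) ε₀ := ⟨by linarith [hb.2], by linarith [hb.1]⟩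
    have ha' : -a ∈ Set.Ioo (0:ℝ) ε₀ := ⟨by linarith [ha.2], by linarith [ha.1]⟩
    have key := key_antitone g hgi hε₀ hneg_ae (-b) hb' (-a) ha' (by linarith)
    rw [hGt, hGt] at key
    simp only [neg_neg] at key
    simp only [abs_of_neg ha.2, abs_of_neg hb.2]
    exact key
end

section
/- Let F : Ω × ℝ → ℝ, F(x,s) = ∫₀^s f(x,t) dt, and suppose there exist ε₀, κ₂ > 0 and q < 2 such that 0 < f(x,s)s ≤ qF(x,s) for a.e. s ∈ (-ε₀,ε₀)\{0}, and F(x,s) ≥ κ₂ for s ∈ {-ε₀, ε₀} and all x ∈ Ω. Then F(x,s) ≥ (κ₂/ε₀^q) |s|^q for all x ∈ Ω and all s with 0 < |s| < ε₀. -/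
open Real MeasureTheory

lemma key12 (f F : ℝ → ℝ)
    (hfi : ∀ a b : ℝ, IntervalIntegrable f volume a b)
    (hF : ∀ s : ℝ, F s = ∫ t in (0:ℝ)..s, f t)
    (ε₀ κ₂ q : ℝ) (hε₀ : 0 < ε₀) (hκ₂ : 0 < κ₂)
    (hae : ∀ᵐ t ∂(volume : Measure ℝ), t ∈ Set.Ioo 0 ε₀ → 0 < f t * t ∧ f t * t ≤ q * F t)
    (hbd : F ε₀ ≥ κ₂) :
    ∀ s : ℝ, 0 < s → s < ε₀ → F s ≥ κ₂ / ε₀ ^ q * s ^ q := by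
  have hne : ∀ c : ℝ, ∀ᵐ t : ℝ ∂volume, t ≠ c := fun c =>
    compl_mem_ae_iff.mpr (measure_singleton c)
  -- F b - F a = ∫ a..b f
  have hsubint : ∀ a b : ℝ, F b - F a = ∫ t in a..b, f t := by
    intro a b
    rw [hF, hF]
    exact intervalIntegral.integral_interval_sub_left (hfi 0 b) (hfi 0 a)
  -- monotonicity
  have mono : ∀ a b : ℝ, 0 ≤ a → a ≤ b → b ≤ ε₀ → F a ≤ F b := by
    intro a b ha hab hb
    have hnn : 0 ≤ ∫ t in a..b, f t := by
      apply intervalIntegral.integral_nonneg_of_ae_restrict hab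
      have h1 : ∀ᵐ t ∂(volume.restrict (Set.Icc a b)),
          t ∈ Set.Ioo 0 ε₀ → 0 < f t * t := ae_restrict_of_ae (hae.mono fun t ht hm => (ht hm).1)
      have h2 : ∀ᵐ t ∂(volume.restrict (Set.Icc a b)), t ∈ Set.Icc a b :=
        ae_restrict_mem measurableSet_Icc
      have h3 : ∀ᵐ t ∂(volume.restrict (Set.Icc a b)), t ≠ 0 ∧ t ≠ ε₀ :=
        ae_restrict_of_ae ((hne 0).and (hne ε₀))
      filter_upwards [h1, h2, h3] with t h1 h2 h3
      have ht0 : 0 < t := lt_of_le_of_ne (le_trans ha h2.1) (Ne.symm h3.1)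
      have htε : t < ε₀ := lt_of_le_of_ne (le_trans h2.2 hb) h3.2
      have := h1 ⟨ht0, htε⟩
      simp only [Pi.zero_apply]
      nlinarith
    linarith [hsubint a b]
  have F0 : F 0 = 0 := by rw [hF]; simp
  have Fnn : ∀ t : ℝ, 0 ≤ t → t ≤ ε₀ → 0 ≤ F t := fun t ht ht' => F0 ▸ mono 0 t le_rfl ht ht'
  -- q > 0
  have hqpos : 0 < q := by
    have hres : (volume.restrict (Set.Ioo (0:ℝ) ε₀)) ≠ 0 := by
      have hvol : volume (Set.Ioo (0:ℝ) ε₀) ≠ 0 := by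
        simp [Real.volume_Ioo, hε₀.ne', hε₀]
      simpa [Ne, Measure.restrict_eq_zero] using hvol
    haveI := ae_neBot.mpr hres
    have h4 : ∀ᵐ t ∂(volume.restrict (Set.Ioo (0:ℝ) ε₀)),
        t ∈ Set.Ioo 0 ε₀ → 0 < f t * t ∧ f t * t ≤ q * F t := ae_restrict_of_ae hae
    have h5 : ∀ᵐ t ∂(volume.restrict (Set.Ioo (0:ℝ) ε₀)), t ∈ Set.Ioo (0:ℝ) ε₀ :=
      ae_restrict_mem measurableSet_Ioo
    obtain ⟨t, ht, htmem⟩ := (h4.and h5).exists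
    obtain ⟨hpos, hle⟩ := ht htmem
    have hFt : 0 ≤ F t := Fnn t htmem.1.le htmem.2.le
    nlinarith
  -- main step inequality
  have step : ∀ a b : ℝ, 0 < a → a ≤ b → b ≤ ε₀ →
      F b * (1 - q * Real.log (b / a)) ≤ F a := by
    intro a b ha hab hb
    have h0uIcc : (0:ℝ) ∉ Set.uIcc a b := by
      rw [Set.uIcc_of_le hab]
      intro h
      exact absurd h.1 (not_le.mpr ha)
    have hInt : IntervalIntegrable (fun t => q * F b * (1/t)) volume a b := by
      apply ContinuousOn.intervalIntegrable
      apply ContinuousOn.mul continuousOn_const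
      apply ContinuousOn.div continuousOn_const continuousOn_id
      intro t ht
      rintro rfl
      exact h0uIcc ht
    have hmono : ∫ t in a..b, f t ≤ ∫ t in a..b, q * F b * (1/t) := by
      apply intervalIntegral.integral_mono_ae_restrict hab (hfi a b) hInt
      have h1 : ∀ᵐ t ∂(volume.restrict (Set.Icc a b)),
          t ∈ Set.Ioo 0 ε₀ → 0 < f t * t ∧ f t * t ≤ q * F t := ae_restrict_of_ae hae
      have h2 : ∀ᵐ t ∂(volume.restrict (Set.Icc a b)), t ∈ Set.Icc a b :=
        ae_restrict_mem measurableSet_Icc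
      have h3 : ∀ᵐ t ∂(volume.restrict (Set.Icc a b)), t ≠ ε₀ := ae_restrict_of_ae (hne ε₀)
      filter_upwards [h1, h2, h3] with t h1 h2 h3
      have ht0 : 0 < t := lt_of_lt_of_le ha h2.1
      have htε : t < ε₀ := lt_of_le_of_ne (le_trans h2.2 hb) h3
      obtain ⟨hp, hl⟩ := h1 ⟨ht0, htε⟩
      have hFtb : F t ≤ F b := mono t b ht0.le h2.2 hb
      rw [mul_one_div, le_div_iff₀ ht0]
      nlinarith [mul_le_mul_of_nonneg_left hFtb hqpos.le]
    rw [intervalIntegral.integral_const_mul, integral_one_div h0uIcc] at hmono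
    have h := hsubint a b
    nlinarith [hmono]
  -- now the iteration
  intro s hs0 hs1
  set L := Real.log (ε₀ / s) with hLdef
  have hL : 0 < L := Real.log_pos ((one_lt_div hs0).mpr hs1)
  have main : ∀ n : ℕ, 0 < n → 0 ≤ 1 - q * L / n → F ε₀ * (1 - q * L / n) ^ n ≤ F s := by
    intro n hn hc
    set c := 1 - q * L / n with hcdef
    have hnn : (n:ℝ) ≠ 0 := Nat.cast_ne_zero.mpr hn.ne'
    set a : ℕ → ℝ := fun i => s * Real.exp (i * L / n) with hadef
    have ha0 : a 0 = s := by simp [hadef]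
    have han : a n = ε₀ := by
      have : ((n:ℝ) * L / n) = L := by field_simp
      rw [hadef]
      simp only [this]
      rw [hLdef, Real.exp_log (div_pos hε₀ hs0)]
      field_simp
    have hapos : ∀ i : ℕ, 0 < a i := fun i => mul_pos hs0 (Real.exp_pos _)
    have hmono2 : ∀ i j : ℕ, i ≤ j → a i ≤ a j := by
      intro i j hij
      apply mul_le_mul_of_nonneg_left _ hs0.le
      apply Real.exp_le_exp.mpr
      have hij' : (i:ℝ) ≤ j := Nat.cast_le.mpr hij
      have hL' : 0 ≤ L := hL.le
      gcongr
    have hamono : ∀ i : ℕ, a i ≤ a (i + 1) := fun i => hmono2 i (i+1) (Nat.le_succ i)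
    have hale : ∀ i : ℕ, i ≤ n → a i ≤ ε₀ := fun i hi => han ▸ hmono2 i n hi
    have hratio : ∀ i : ℕ, Real.log (a (i + 1) / a i) = L / n := by
      intro i
      rw [hadef]
      have h1 : s * Real.exp ((i+1) * L / n) / (s * Real.exp (i * L / n))
          = Real.exp ((i+1) * L / n - i * L / n) := by
        rw [mul_div_mul_left _ _ hs0.ne', ← Real.exp_sub]
      simp only [Nat.cast_add, Nat.cast_one] at h1 ⊢
      rw [h1, Real.log_exp]
      field_simp
      ring
    have claim : ∀ i : ℕ, i ≤ n → F ε₀ * c ^ i ≤ F (a (n - i)) := by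
      intro i
      induction i with
      | zero => intro _; simp [han]
      | succ i ih =>
        intro hi
        have hi' : i ≤ n := Nat.le_of_succ_le hi
        have IH := ih hi'
        set j := n - (i + 1) with hjdef
        have hrw : n - i = j + 1 := by omega
        rw [hrw] at IH
        have hstep := step (a j) (a (j + 1)) (hapos j) (hamono j)
          (hale (j + 1) (by omega))
        rw [hratio j] at hstep
        have hc' : F (a (j+1)) * c ≤ F (a j) := by
          have : 1 - q * (L / n) = c := by rw [hcdef]; ring
          rwa [this] at hstep
        calc F ε₀ * c ^ (i + 1) = (F ε₀ * c ^ i) * c := by ring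
          _ ≤ F (a (j + 1)) * c := mul_le_mul_of_nonneg_right IH hc
          _ ≤ F (a j) := hc'
    have := claim n le_rfl
    simpa [ha0] using this
  -- take the limit
  have hten : Filter.Tendsto (fun n : ℕ => F ε₀ * (1 + (-(q * L)) / n) ^ n)
      Filter.atTop (nhds (F ε₀ * Real.exp (-(q * L)))) :=
    (Real.tendsto_one_add_div_pow_exp (-(q * L))).const_mul _
  have hfinal : F ε₀ * Real.exp (-(q * L)) ≤ F s := by
    apply le_of_tendsto hten
    rw [Filter.eventually_atTop]
    refine ⟨max 1 ⌈q * L⌉₊, fun n hn => ?_⟩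
    have hn1 : 0 < n := lt_of_lt_of_le one_pos (le_trans (le_max_left _ _) hn)
    have hnql : q * L ≤ n := le_trans (Nat.le_ceil _)
      (Nat.cast_le.mpr (le_trans (le_max_right _ _) hn))
    have heq : 1 + (-(q * L)) / (n:ℝ) = 1 - q * L / n := by ring
    rw [heq]
    apply main n hn1
    rw [sub_nonneg, div_le_one (by positivity)]
    exact hnql
  -- rewrite exponential as rpow
  have hexp : Real.exp (-(q * L)) = (s / ε₀) ^ q := by
    have hls : Real.log (s / ε₀) = -L := by
      rw [hLdef, ← Real.log_inv, inv_div]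
    rw [Real.rpow_def_of_pos (div_pos hs0 hε₀), hls]
    congr 1
    ring
  have hdiv : (s / ε₀) ^ q = s ^ q / ε₀ ^ q := Real.div_rpow hs0.le hε₀.le q
  have hrnn : (0:ℝ) ≤ (s / ε₀) ^ q := Real.rpow_nonneg (div_pos hs0 hε₀).le q
  calc κ₂ / ε₀ ^ q * s ^ q = κ₂ * (s / ε₀) ^ q := by rw [hdiv]; ring
    _ ≤ F ε₀ * (s / ε₀) ^ q := mul_le_mul_of_nonneg_right hbd hrnn
    _ = F ε₀ * Real.exp (-(q * L)) := by rw [hexp]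
    _ ≤ F s := hfinal

open Real MeasureTheory

theorem stmt12 {X : Type*} (f F : X → ℝ → ℝ)
    (hfi : ∀ x : X, ∀ a b : ℝ, IntervalIntegrable (f x) volume a b)
    (hF : ∀ (x : X) (s : ℝ), F x s = ∫ t in (0 : ℝ)..s, f x t)
    (ε₀ κ₂ q : ℝ) (hε₀ : 0 < ε₀) (hκ₂ : 0 < κ₂) (hq : q < 2)
    (hsub : ∀ x : X, ∀ᵐ s ∂(volume.restrict (Set.Ioo (-ε₀) ε₀)),
      s ≠ 0 → 0 < f x s * s ∧ f x s * s ≤ q * F x s)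
    (hbd : ∀ x : X, F x ε₀ ≥ κ₂ ∧ F x (-ε₀) ≥ κ₂) :
    ∀ (x : X) (s : ℝ), 0 < |s| → |s| < ε₀ → F x s ≥ κ₂ / ε₀ ^ q * |s| ^ q := by
  intro x s hs0 hs1
  have hae0 : ∀ᵐ t ∂(volume : Measure ℝ), t ∈ Set.Ioo (-ε₀) ε₀ →
      t ≠ 0 → 0 < f x t * t ∧ f x t * t ≤ q * F x t :=
    (ae_restrict_iff' measurableSet_Ioo).mp (hsub x)
  rcases lt_or_gt_of_ne (abs_pos.mp hs0) with hneg | hpos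
  · -- s < 0
    have habs : |s| = -s := abs_of_neg hneg
    rw [habs] at hs1 ⊢
    set g : ℝ → ℝ := fun u => -(f x (-u)) with hgdef
    set G : ℝ → ℝ := fun u => F x (-u) with hGdef
    have hgi : ∀ a b : ℝ, IntervalIntegrable g volume a b := by
      intro a b
      have := ((IntervalIntegrable.iff_comp_neg).mp (hfi x (-a) (-b))).neg
      simpa [hgdef, Pi.neg_def] using this
    have hG : ∀ u : ℝ, G u = ∫ t in (0:ℝ)..u, g t := by
      intro u
      have h1 : (∫ t in (0:ℝ)..u, f x (-t)) = ∫ t in (-u)..(0:ℝ), f x t := by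
        simpa using intervalIntegral.integral_comp_neg (a := 0) (b := u) (f x)
      show F x (-u) = ∫ t in (0:ℝ)..u, g t
      rw [hF]
      simp only [hgdef]
      rw [intervalIntegral.integral_neg, h1, ← intervalIntegral.integral_symm]
    have hnegqmp : Measure.QuasiMeasurePreserving (fun t : ℝ => -t) volume volume :=
      (Measure.measurePreserving_neg (volume : Measure ℝ)).quasiMeasurePreserving
    have haeg : ∀ᵐ t ∂(volume : Measure ℝ), t ∈ Set.Ioo 0 ε₀ →
        0 < g t * t ∧ g t * t ≤ q * G t := by
      have h := hnegqmp.ae hae0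
      filter_upwards [h] with t ht htmem
      have hmem : -t ∈ Set.Ioo (-ε₀) ε₀ := by
        constructor <;> [linarith [htmem.2]; linarith [htmem.1]]
      obtain ⟨h1, h2⟩ := ht hmem (by intro h; rw [neg_eq_zero] at h; exact htmem.1.ne' h)
      constructor
      · simp only [hgdef]; nlinarith
      · simp only [hgdef, hGdef]; nlinarith
    have := key12 g G hgi hG ε₀ κ₂ q hε₀ hκ₂ haeg (by simpa [hGdef] using (hbd x).2)
      (-s) (by linarith) hs1
    simpa [hGdef] using this
  · -- s > 0
    have habs : |s| = s := abs_of_pos hpos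
    rw [habs] at hs1 ⊢
    have haef : ∀ᵐ t ∂(volume : Measure ℝ), t ∈ Set.Ioo 0 ε₀ →
        0 < f x t * t ∧ f x t * t ≤ q * F x t := by
      filter_upwards [hae0] with t ht htmem
      exact ht ⟨by linarith [htmem.1], htmem.2⟩ htmem.1.ne'
    exact key12 (f x) (F x) (hfi x) (hF x) ε₀ κ₂ q hε₀ hκ₂ haef (hbd x).1 s hpos hs1
end

section
/- Let Ω ⊆ ℝ^N be open, C₀, C₁ > 0, 0 < r₀ < δ, q ∈ [1,2), and let D, d : [r₀, δ) → ℝ be continuous, differentiable on (r₀,δ), with d nondecreasing, d' ≥ 0, D(r₀) = d(r₀) = 0, and suppose D'(r) ≥ -C₀ D(r) - C₁ d(r) + ((2-q) - g(r)) d'(r) on (r₀, δ), where g : [r₀,δ) → [0,∞) is continuous with g(r₀) = 0. Then there exist r₁ ∈ (r₀, δ) and C₃ > 0 such that D(r) ≥ C₃ d(r) for all r ∈ (r₀, r₁). -/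
open Real

theorem stmt17 (C₀ C₁ q r₀ δ : ℝ) (hC₀ : 0 < C₀) (hC₁ : 0 < C₁)
    (hq1 : 1 ≤ q) (hq2 : q < 2) (hr₀ : 0 < r₀) (hδ : r₀ < δ)
    (D d D' d' g : ℝ → ℝ)
    (hDcont : ContinuousOn D (Set.Ico r₀ δ)) (hdcont : ContinuousOn d (Set.Ico r₀ δ))
    (hDder : ∀ r ∈ Set.Ioo r₀ δ, HasDerivAt D (D' r) r)
    (hdder : ∀ r ∈ Set.Ioo r₀ δ, HasDerivAt d (d' r) r)
    (hdmono : MonotoneOn d (Set.Ico r₀ δ))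
    (hd'nonneg : ∀ r ∈ Set.Ioo r₀ δ, 0 ≤ d' r)
    (hD₀ : D r₀ = 0) (hd₀ : d r₀ = 0)
    (hgcont : ContinuousOn g (Set.Ico r₀ δ)) (hgnonneg : ∀ r ∈ Set.Ico r₀ δ, 0 ≤ g r)
    (hg₀ : g r₀ = 0)
    (hineq : ∀ r ∈ Set.Ioo r₀ δ, D' r ≥ -C₀ * D r - C₁ * d r + ((2 - q) - g r) * d' r) :
    ∃ r₁ ∈ Set.Ioo r₀ δ, ∃ C₃ > 0, ∀ r ∈ Set.Ioo r₀ r₁, D r ≥ C₃ * d r := by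
  set c : ℝ := (2 - q) / 2 with hc_def
  have hc : 0 < c := by simp only [hc_def]; linarith
  -- continuity of g at r₀ within Ico
  have hgct : ContinuousWithinAt g (Set.Ico r₀ δ) r₀ :=
    hgcont r₀ ⟨le_refl _, hδ⟩
  rw [Metric.continuousWithinAt_iff] at hgct
  obtain ⟨ε₁, hε₁pos, hε₁⟩ := hgct c hc
  -- ε₂ controlling the C₁ term
  set ε₂ : ℝ := (c / 2) * Real.exp (C₀ * r₀) / (C₁ * Real.exp (C₀ * δ)) with hε₂def
  have hε₂pos : 0 < ε₂ := by positivity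
  set r₁ : ℝ := r₀ + min (min (ε₁ / 2) ε₂) ((δ - r₀) / 2) with hr₁def
  clear_value r₁ ε₂ c
  have hmpos : 0 < min (min (ε₁ / 2) ε₂) ((δ - r₀) / 2) := by
    have : 0 < δ - r₀ := by linarith
    positivity
  have hr₁gt : r₀ < r₁ := by simp only [hr₁def]; linarith
  have hr₁lt : r₁ < δ := by
    have h1 : min (min (ε₁ / 2) ε₂) ((δ - r₀) / 2) ≤ (δ - r₀) / 2 := min_le_right _ _
    simp only [hr₁def]; linarith
  have hsub : Set.Icc r₀ r₁ ⊆ Set.Ico r₀ δ := fun x hx => ⟨hx.1, lt_of_le_of_lt hx.2 hr₁lt⟩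
  have hsubIoo : Set.Ioo r₀ r₁ ⊆ Set.Ioo r₀ δ := fun x hx => ⟨hx.1, lt_trans hx.2 hr₁lt⟩
  -- g small on [r₀, r₁]
  have hgsmall : ∀ r ∈ Set.Icc r₀ r₁, g r ≤ c := by
    intro r hr
    have hrI : r ∈ Set.Ico r₀ δ := hsub hr
    have hdist : dist r r₀ < ε₁ := by
      rw [Real.dist_eq, abs_of_nonneg (by linarith [hr.1])]
      have h1 : r - r₀ ≤ min (min (ε₁ / 2) ε₂) ((δ - r₀) / 2) := by
        simp only [hr₁def] at hr; linarith [hr.2]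
      have h2 : min (min (ε₁ / 2) ε₂) ((δ - r₀) / 2) ≤ ε₁ / 2 :=
        le_trans (min_le_left _ _) (min_le_left _ _)
      linarith
    have := hε₁ hrI hdist
    rw [Real.dist_eq, hg₀, sub_zero] at this
    calc g r ≤ |g r| := le_abs_self _
      _ ≤ c := le_of_lt this
  -- key bound on the C₁ term
  have hkey : C₁ * Real.exp (C₀ * r₁) * (r₁ - r₀) ≤ (c / 2) * Real.exp (C₀ * r₀) := by
    have h1 : r₁ - r₀ ≤ ε₂ := by
      have := le_trans (min_le_left (min (ε₁ / 2) ε₂) ((δ - r₀) / 2)) (min_le_right (ε₁ / 2) ε₂)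
      simp only [hr₁def]; linarith
    have h2 : Real.exp (C₀ * r₁) ≤ Real.exp (C₀ * δ) := by
      apply Real.exp_le_exp.mpr
      nlinarith [hr₁lt]
    have h3 : C₁ * Real.exp (C₀ * r₁) * (r₁ - r₀) ≤ C₁ * Real.exp (C₀ * δ) * ε₂ := by
      have hnn : 0 ≤ r₁ - r₀ := by linarith
      have := mul_le_mul (mul_le_mul_of_nonneg_left h2 hC₁.le) h1 hnn
        (by positivity : (0:ℝ) ≤ C₁ * Real.exp (C₀ * δ))
      linarith
    have h4 : C₁ * Real.exp (C₀ * δ) * ε₂ = (c / 2) * Real.exp (C₀ * r₀) := by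
      rw [hε₂def]; field_simp
    exact h3.trans h4.le
  -- d is nonnegative on [r₀, δ)
  have hdnn : ∀ r ∈ Set.Ico r₀ δ, 0 ≤ d r := by
    intro r hr
    have := hdmono ⟨le_refl _, hδ⟩ hr hr.1
    rwa [hd₀] at this
  -- auxiliary function L
  set L : ℝ → ℝ := fun r => Real.exp (C₀ * r) * D r - c * Real.exp (C₀ * r₀) * d r
      + C₁ * Real.exp (C₀ * r₁) * ((r - r₀) * d r) with hLdef
  set L' : ℝ → ℝ := fun r => (Real.exp (C₀ * r) * C₀ * D r + Real.exp (C₀ * r) * D' r)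
      - c * Real.exp (C₀ * r₀) * d' r
      + C₁ * Real.exp (C₀ * r₁) * (1 * d r + (r - r₀) * d' r) with hL'def
  clear_value L' L
  have hLder : ∀ r ∈ Set.Ioo r₀ r₁, HasDerivAt L (L' r) r := by
    intro r hr
    simp only [hLdef, hL'def]
    have hrδ : r ∈ Set.Ioo r₀ δ := hsubIoo hr
    have h1 : HasDerivAt (fun x => Real.exp (C₀ * x)) (Real.exp (C₀ * r) * C₀) r :=
      ((hasDerivAt_id r).const_mul C₀).exp.congr_deriv (by simp)
    have h2 : HasDerivAt (fun x => Real.exp (C₀ * x) * D x)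
        (Real.exp (C₀ * r) * C₀ * D r + Real.exp (C₀ * r) * D' r) r :=
      h1.mul (hDder r hrδ)
    have h3 : HasDerivAt (fun x => c * Real.exp (C₀ * r₀) * d x)
        (c * Real.exp (C₀ * r₀) * d' r) r := (hdder r hrδ).const_mul _
    have h4 : HasDerivAt (fun x => (x - r₀) * d x) (1 * d r + (r - r₀) * d' r) r :=
      ((hasDerivAt_id r).sub_const r₀).mul (hdder r hrδ)
    exact (h2.sub h3).add ((h4.const_mul (C₁ * Real.exp (C₀ * r₁))).congr_deriv (by ring))
  have hL'nn : ∀ r ∈ Set.Ioo r₀ r₁, 0 ≤ L' r := by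
    intro r hr
    have hrδ : r ∈ Set.Ioo r₀ δ := hsubIoo hr
    have hrIco : r ∈ Set.Ico r₀ δ := ⟨le_of_lt hrδ.1, hrδ.2⟩
    have hdn : 0 ≤ d r := hdnn r hrIco
    have hd'n : 0 ≤ d' r := hd'nonneg r hrδ
    have hg : g r ≤ c := hgsmall r ⟨le_of_lt hr.1, le_of_lt hr.2⟩
    have hgn : 0 ≤ g r := hgnonneg r hrIco
    have hexp1 : Real.exp (C₀ * r₀) ≤ Real.exp (C₀ * r) :=
      Real.exp_le_exp.mpr (by nlinarith [hr.1])
    have hexp2 : Real.exp (C₀ * r) ≤ Real.exp (C₀ * r₁) :=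
      Real.exp_le_exp.mpr (by nlinarith [hr.2])
    have hDin := hineq r hrδ
    have hepos : (0:ℝ) < Real.exp (C₀ * r) := Real.exp_pos _
    have hstep2 : Real.exp (C₀ * r) * (-C₀ * D r) + Real.exp (C₀ * r) * (-C₁ * d r)
        + Real.exp (C₀ * r) * (((2 - q) - g r) * d' r) ≤ Real.exp (C₀ * r) * D' r := by
      have h := mul_le_mul_of_nonneg_left hDin (le_of_lt hepos)
      have he : Real.exp (C₀ * r) * (-C₀ * D r - C₁ * d r + ((2 - q) - g r) * d' r)
          = Real.exp (C₀ * r) * (-C₀ * D r) + Real.exp (C₀ * r) * (-C₁ * d r)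
          + Real.exp (C₀ * r) * (((2 - q) - g r) * d' r) := by ring
      linarith [h, he.le, he.ge]
    have h2qc : c ≤ (2 - q) - g r := by
      have : (2 - q) - c = c := by rw [hc_def]; ring
      linarith
    simp only [hL'def]
    have hA : 0 ≤ C₁ * d r * (Real.exp (C₀ * r₁) - Real.exp (C₀ * r)) := by
      apply mul_nonneg (by positivity); linarith
    have hB : 0 ≤ d' r * (Real.exp (C₀ * r) * ((2 - q) - g r) - c * Real.exp (C₀ * r₀)) := by
      apply mul_nonneg hd'n
      have : c * Real.exp (C₀ * r₀) ≤ ((2 - q) - g r) * Real.exp (C₀ * r) := by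
        apply mul_le_mul h2qc hexp1 (le_of_lt (Real.exp_pos _)) (by linarith)
      linarith [this]
    have hC : 0 ≤ C₁ * Real.exp (C₀ * r₁) * ((r - r₀) * d' r) := by
      apply mul_nonneg (by positivity)
      apply mul_nonneg (by linarith [hr.1]) hd'n
    linarith [hstep2, hA, hB, hC]
  -- L is monotone on [r₀, r₁]
  have hLcont : ContinuousOn L (Set.Icc r₀ r₁) := by
    rw [hLdef]
    apply ContinuousOn.add
    apply ContinuousOn.sub
    · exact (Real.continuous_exp.comp (continuous_const.mul continuous_id)).continuousOn.mul
        (hDcont.mono hsub)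
    · exact continuousOn_const.mul (hdcont.mono hsub)
    · exact continuousOn_const.mul
        (((continuous_id.sub continuous_const).continuousOn).mul (hdcont.mono hsub))
  have hLmono : MonotoneOn L (Set.Icc r₀ r₁) := by
    apply monotoneOn_of_deriv_nonneg (convex_Icc r₀ r₁) hLcont
    · intro x hx
      rw [interior_Icc] at hx
      exact (hLder x hx).differentiableAt.differentiableWithinAt
    · intro x hx
      rw [interior_Icc] at hx
      rw [(hLder x hx).deriv]
      exact hL'nn x hx
  have hL0 : L r₀ = 0 := by simp [hLdef, hD₀, hd₀]
  refine ⟨r₁, ⟨hr₁gt, hr₁lt⟩, (c / 2) * Real.exp (C₀ * (r₀ - δ)), by positivity, ?_⟩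
  intro r hr
  have hrδ : r ∈ Set.Ioo r₀ δ := hsubIoo hr
  have hrIco : r ∈ Set.Ico r₀ δ := ⟨le_of_lt hrδ.1, hrδ.2⟩
  have hdn : 0 ≤ d r := hdnn r hrIco
  have hLr : 0 ≤ L r := by
    have := hLmono (Set.left_mem_Icc.mpr (le_of_lt hr₁gt))
      ⟨le_of_lt hr.1, le_of_lt hr.2⟩ (le_of_lt hr.1)
    rwa [hL0] at this
  -- from L r ≥ 0 extract the bound
  have hbound : Real.exp (C₀ * r) * D r ≥
      (c * Real.exp (C₀ * r₀) - C₁ * Real.exp (C₀ * r₁) * (r - r₀)) * d r := by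
    simp only [hLdef] at hLr; linarith [hLr]
  have hcoef : (c / 2) * Real.exp (C₀ * r₀) ≤
      c * Real.exp (C₀ * r₀) - C₁ * Real.exp (C₀ * r₁) * (r - r₀) := by
    have h1 : C₁ * Real.exp (C₀ * r₁) * (r - r₀) ≤ C₁ * Real.exp (C₀ * r₁) * (r₁ - r₀) := by
      apply mul_le_mul_of_nonneg_left (by linarith [hr.2]) (by positivity)
    linarith
  have hbound2 : Real.exp (C₀ * r) * D r ≥ (c / 2) * Real.exp (C₀ * r₀) * d r := by
    have := mul_le_mul_of_nonneg_right hcoef hdn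
    linarith
  -- divide by exp (C₀ * r)
  have hepos : (0:ℝ) < Real.exp (C₀ * r) := Real.exp_pos _
  have hDr : D r ≥ (c / 2) * Real.exp (C₀ * r₀) * d r / Real.exp (C₀ * r) := by
    rw [ge_iff_le, div_le_iff₀ hepos]
    linarith [hbound2]
  have hfinal : (c / 2) * Real.exp (C₀ * (r₀ - δ)) * d r ≤
      (c / 2) * Real.exp (C₀ * r₀) * d r / Real.exp (C₀ * r) := by
    rw [le_div_iff₀ hepos]
    have hee : Real.exp (C₀ * (r₀ - δ)) * Real.exp (C₀ * r) = Real.exp (C₀ * (r₀ - δ + r)) := by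
      rw [← Real.exp_add]; ring_nf
    have hle : Real.exp (C₀ * (r₀ - δ + r)) ≤ Real.exp (C₀ * r₀) :=
      Real.exp_le_exp.mpr (by nlinarith [hrδ.2])
    calc (c / 2) * Real.exp (C₀ * (r₀ - δ)) * d r * Real.exp (C₀ * r)
        = (c / 2) * d r * (Real.exp (C₀ * (r₀ - δ)) * Real.exp (C₀ * r)) := by ring
      _ = (c / 2) * d r * Real.exp (C₀ * (r₀ - δ + r)) := by rw [hee]
      _ ≤ (c / 2) * d r * Real.exp (C₀ * r₀) := by
          apply mul_le_mul_of_nonneg_left hle (by positivity)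
      _ = (c / 2) * Real.exp (C₀ * r₀) * d r := by ring
  linarith [hDr, hfinal]
end
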